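/- Let X, Θ be finite sets, ν, μ fully supported probability vectors, c : X × Θ → ℝ. If (a,b) and (a',b') are two pairs of functions such that both P(ξ,θ) = ν(ξ)μ(θ)e^{−a(ξ)−b(θ)−c(ξ,θ)} and P(ξ,θ) = ν(ξ)μ(θ)e^{−a'(ξ)−b'(θ)−c(ξ,θ)} define the same probability measure P with marginals ν and μ, then there exists a constant k ∈ ℝ such that a'(ξ) = a(ξ) + k for all ξ and b'(θ) = b(θ) − k for all θ. -/
import Mathlib


open Finset Real

theorem schrodinger_potentials_unique_up_to_translation
    {X Θ : Type*} [Fintype X] [Fintype Θ] [Nonempty X] [Nonempty Θ]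
    (ν : X → ℝ) (hν0 : ∀ ξ, 0 < ν ξ) (hν1 : ∑ ξ, ν ξ = 1)
    (μ : Θ → ℝ) (hμ0 : ∀ θ, 0 < μ θ) (hμ1 : ∑ θ, μ θ = 1)
    (c : X → Θ → ℝ)
    (a₁ a₂ : X → ℝ) (b₁ b₂ : Θ → ℝ)
    (P : X → Θ → ℝ)
    (hP₁ : ∀ ξ θ, P ξ θ = ν ξ * μ θ * Real.exp (-a₁ ξ - b₁ θ - c ξ θ))
    (hP₂ : ∀ ξ θ, P ξ θ = ν ξ * μ θ * Real.exp (-a₂ ξ - b₂ θ - c ξ θ))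
    (hPν : ∀ ξ, ∑ θ, P ξ θ = ν ξ) (hPμ : ∀ θ, ∑ ξ, P ξ θ = μ θ) :
    ∃ k : ℝ, (∀ ξ, a₂ ξ = a₁ ξ + k) ∧ (∀ θ, b₂ θ = b₁ θ - k) := by
  have key : ∀ ξ θ, a₁ ξ + b₁ θ = a₂ ξ + b₂ θ := by
    intro ξ θ
    have h := (hP₁ ξ θ).symm.trans (hP₂ ξ θ)
    have hpos : 0 < ν ξ * μ θ := mul_pos (hν0 ξ) (hμ0 θ)
    
    rw [mul_assoc, mul_assoc] at h
    have h2 := mul_left_cancel₀ (ne_of_gt (hν0 ξ)) h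
    have h3 := mul_left_cancel₀ (ne_of_gt (hμ0 θ)) h2
    have := Real.exp_injective h3
    linarith
  obtain ⟨θ₀⟩ := ‹Nonempty Θ›
  refine ⟨b₁ θ₀ - b₂ θ₀, fun ξ => by have := key ξ θ₀; linarith,
    fun θ => by
      obtain ⟨ξ₀⟩ := ‹Nonempty X›
      have h1 := key ξ₀ θ₀
      have h2 := key ξ₀ θ
      linarith⟩
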